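/- Let P be an r-differential poset, n ≥ 1, and let M_n = U_{n−1}(D_nU_{n−1})^{-1}D_n : ℚP_n → ℚP_n with matrix entries m_{xy} in the standard basis P_n. Let S ⊆ P_n and let M_S be the principal submatrix of M_n with rows and columns indexed by S. If M_S does not have 1 as an eigenvalue, then Δp_n ≥ |S|. -/

import Mathlib

open Classical in
/-- The up operator `U_n : ℚP_n → ℚP_{n+1}` of a graded poset with rank function `rank`,
sending each basis element `x ∈ P_n` to the sum of the elements covering it. -/
noncomputable def upMap {P : Type*} [PartialOrder P] (rank : P → ℕ)
    [∀ m : ℕ, Fintype {x : P // rank x = m}] (n : ℕ) :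
    ({x : P // rank x = n} → ℚ) →ₗ[ℚ] ({x : P // rank x = n + 1} → ℚ) :=
  Matrix.mulVecLin (fun (y : {x : P // rank x = n + 1}) (x : {x : P // rank x = n}) =>
    if (x : P) ⋖ (y : P) then 1 else 0)

open Classical in
/-- The down operator `D_n : ℚP_n → ℚP_{n-1}` of a graded poset with rank function `rank`,
sending each basis element `x ∈ P_n` to the sum of the elements it covers.
(For `n = 0` this is the zero map on `ℚP_0` in a graded poset, matching `D_0 = 0`.) -/
noncomputable def downMap {P : Type*} [PartialOrder P] (rank : P → ℕ)
    [∀ m : ℕ, Fintype {x : P // rank x = m}] (n : ℕ) :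
    ({x : P // rank x = n} → ℚ) →ₗ[ℚ] ({x : P // rank x = n - 1} → ℚ) :=
  Matrix.mulVecLin (fun (z : {x : P // rank x = n - 1}) (x : {x : P // rank x = n}) =>
    if (z : P) ⋖ (x : P) then 1 else 0)

/-- `P` (a partial order with rank function `rank`, all rank sets finite) is an
`r`-differential poset: `r > 0`, there is a least element `0̂` of rank `0`, the poset is
graded (covers raise rank by exactly one, the rank function is strictly monotone, and every
element of nonzero rank covers something), and `D_{n+1} U_n - U_{n-1} D_n = r·I` on `ℚP_n`
for all `n ≥ 0` (for `n = 0` the relation reads `D_1 U_0 = r·I`, since `D_0 = 0`). -/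
structure IsDifferentialPoset {P : Type*} [PartialOrder P] (rank : P → ℕ)
    [∀ m : ℕ, Fintype {x : P // rank x = m}] (r : ℕ) : Prop where
  r_pos : 0 < r
  exists_bot : ∃ b : P, rank b = 0 ∧ ∀ x : P, b ≤ x
  rank_covBy : ∀ x y : P, x ⋖ y → rank y = rank x + 1
  rank_strictMono : ∀ x y : P, x < y → rank x < rank y
  exists_covBy_of_rank_ne_zero : ∀ x : P, rank x ≠ 0 → ∃ y : P, y ⋖ x
  diff_zero : downMap rank 1 ∘ₗ upMap rank 0 = (r : ℚ) • LinearMap.id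
  diff : ∀ n : ℕ,
    LinearMap.comp (M₃ := {x : P // rank x = n + 1} → ℚ)
        (downMap rank (n + 2)) (upMap rank (n + 1))
      - upMap rank n ∘ₗ downMap rank (n + 1) = (r : ℚ) • LinearMap.id

/-- Gaetz–Venkataramana, Lemma 2.5. Let `P` be an `r`-differential
poset, `n ≥ 1`, `M_n = U_{n-1} (D_n U_{n-1})⁻¹ D_n : ℚP_n → ℚP_n` (entries `m_{xy}` in the
standard basis), `S ⊆ P_n`, and `M_S` the principal submatrix of `M_n` indexed by `S`.
If `M_S` does not have `1` as an eigenvalue, then `Δp_n = p_n - p_{n-1} ≥ |S|`.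
(Stated with `n` replaced by `n + 1`; the inverse of `D_{n+1} U_n` is presented as a
two-sided inverse `R`.) -/
theorem rank_gap_of_submatrix_no_eigenvalue_one {P : Type*} [PartialOrder P]
    [DecidableEq P] (rank : P → ℕ) [∀ m : ℕ, Fintype {x : P // rank x = m}] (r : ℕ)
    (hP : IsDifferentialPoset rank r) (n : ℕ)
    (R : ({x : P // rank x = n} → ℚ) →ₗ[ℚ] ({x : P // rank x = n} → ℚ))
    (hR₁ : R ∘ₗ LinearMap.comp (M₃ := {x : P // rank x = n} → ℚ)
      (downMap rank (n + 1)) (upMap rank n) = LinearMap.id)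
    (hR₂ : LinearMap.comp (M₃ := {x : P // rank x = n} → ℚ)
      (downMap rank (n + 1)) (upMap rank n) ∘ₗ R = LinearMap.id)
    (S : Finset {v : P // rank v = n + 1})
    (hS : ¬ Module.End.HasEigenvalue
      (Matrix.mulVecLin (fun a b : S =>
        (upMap rank n ∘ₗ R ∘ₗ downMap rank (n + 1))
          (Pi.single (b : {v : P // rank v = n + 1}) 1) a)) 1) :
    Fintype.card {v : P // rank v = n} + S.card
      ≤ Fintype.card {v : P // rank v = n + 1} := by
  
  classical
  set D := downMap rank (n + 1) with hD
  set U := upMap rank n with hU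
  set M := U ∘ₗ R ∘ₗ D with hM
  -- D ∘ M = D
  have hDM : ∀ x, D (M x) = D x := by
    intro x
    have := congrArg (fun f => f (D x)) hR₂
    simpa [hM, LinearMap.comp_apply] using this
  -- vectors (id - M) e_v lie in ker D
  have hker : ∀ v : {v : P // rank v = n + 1},
      Pi.single v (1:ℚ) - M (Pi.single v 1) ∈ LinearMap.ker D := by
    intro v
    rw [LinearMap.mem_ker, map_sub, hDM, sub_self]
  -- the family
  let g : S → LinearMap.ker D := fun v =>
    ⟨Pi.single (v : {v : P // rank v = n + 1}) 1 - M (Pi.single (v : _) 1), hker _⟩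
  have hSbot : Module.End.eigenspace (Matrix.mulVecLin (fun a b : S =>
      (upMap rank n ∘ₗ R ∘ₗ downMap rank (n + 1))
        (Pi.single (b : {v : P // rank v = n + 1}) 1) a)) 1 = ⊥ := by
    by_contra h
    exact hS (Module.End.hasEigenvalue_iff.mpr h)
  have hgli : LinearIndependent ℚ g := by
    rw [Fintype.linearIndependent_iff]
    intro c hc i
    have hc' : ∑ v : S, c v • (Pi.single (v : {v : P // rank v = n + 1}) (1:ℚ)
        - M (Pi.single (v : _) 1)) = 0 := by
      have := congrArg (Subtype.val) hc
      simpa [g] using this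
    -- c is a 1-eigenvector of the submatrix
    have hTc : ∀ a : S, ∑ b : S, M (Pi.single (b : {v : P // rank v = n + 1}) 1) a * c b
        = c a := by
      intro a
      have := congrArg (fun f => f (a : {v : P // rank v = n + 1})) hc'
      simp only [Finset.sum_apply, Pi.smul_apply, Pi.sub_apply, smul_eq_mul,
        Pi.zero_apply, mul_sub, Finset.sum_sub_distrib] at this
      have hsingle : ∑ v : S, c v * (Pi.single (v : {v : P // rank v = n + 1}) (1:ℚ) :
          {v : P // rank v = n + 1} → ℚ) (a : {v : P // rank v = n + 1}) = c a := by
        rw [Finset.sum_eq_single a]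
        · simp
        · intro b _ hb
          rw [Pi.single_apply, if_neg (fun h => hb (Subtype.ext h).symm),
            mul_zero]
        · simp
      rw [hsingle] at this
      have h2 : ∑ v : S, c v * M (Pi.single (v : {v : P // rank v = n + 1}) 1)
          (a : {v : P // rank v = n + 1}) = c a := by linarith
      rw [← h2]
      exact Finset.sum_congr rfl (fun b _ => mul_comm _ _)
    have hcmem : c ∈ Module.End.eigenspace (Matrix.mulVecLin (fun a b : S =>
        (upMap rank n ∘ₗ R ∘ₗ downMap rank (n + 1))
          (Pi.single (b : {v : P // rank v = n + 1}) 1) a)) 1 := by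
      rw [Module.End.mem_eigenspace_iff]
      funext a
      erw [Matrix.mulVecLin_apply]
      simpa [Matrix.mulVec, dotProduct, hM, hU, hD] using hTc a
    rw [hSbot] at hcmem
    simpa using congrFun (Submodule.mem_bot ℚ |>.mp hcmem) i
  -- D is surjective
  have hDsurj : Function.Surjective D := by
    intro w
    refine ⟨U (R w), ?_⟩
    have := congrArg (fun f => f w) hR₂
    simpa [LinearMap.comp_apply] using this
  have hrange : LinearMap.range D = ⊤ := LinearMap.range_eq_top.mpr hDsurj
  have hrank := D.finrank_range_add_finrank_ker
  rw [hrange] at hrank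
  have hfr : Module.finrank ℚ ({x : P // rank x = n} → ℚ)
      + Module.finrank ℚ (LinearMap.ker D)
      = Module.finrank ℚ ({v : P // rank v = n + 1} → ℚ) := by
    simpa using hrank
  have hcard : Fintype.card S ≤ Module.finrank ℚ (LinearMap.ker D) :=
    hgli.fintype_card_le_finrank
  have h1 : Module.finrank ℚ ({x : P // rank x = n} → ℚ)
      = Fintype.card {x : P // rank x = n} := Module.finrank_fintype_fun_eq_card ℚ
  have h2 : Module.finrank ℚ ({v : P // rank v = n + 1} → ℚ)
      = Fintype.card {v : P // rank v = n + 1} := Module.finrank_fintype_fun_eq_card ℚ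
  have h3 : Fintype.card S = S.card := Fintype.card_coe S
  omega
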